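/- Let Y_0 = 0, Y_1,...,Y_n be a sequence of random variables adapted to a filtration such that for all t: |Y_t − Y_{t−1}| ≤ 1 almost surely, and E[Y_t − Y_{t−1} | F_{t−1}] ≤ −α·E[(Y_t − Y_{t−1})^2 | F_{t−1}] for some α ∈ (0, 1/2). Then for all λ ≥ 0, P[Y_n ≥ λ] ≤ exp(−αλ). -/

import Mathlib

open MeasureTheory

lemma exp_le_one_add_add_sq {u : ℝ} (h : |u| ≤ 1) : Real.exp u ≤ 1 + u + u ^ 2 := by
  have hb := Real.exp_bound h (n := 3) (by norm_num)
  have hs : ∑ m ∈ Finset.range 3, u ^ m / m.factorial = 1 + u + u ^ 2 / 2 := by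
    simp [Finset.sum_range_succ, Nat.factorial]
  rw [hs] at hb
  norm_num [Nat.factorial] at hb
  have h3 : |u| ^ 3 ≤ u ^ 2 := by
    have : |u| ^ 3 = |u| * u ^ 2 := by rw [← sq_abs]; ring
    nlinarith [abs_nonneg u, sq_nonneg u]
  have := (abs_sub_le_iff.1 hb).1
  nlinarith [sq_nonneg u]

lemma condexp_affine {Ω : Type*} {m m0 : MeasurableSpace Ω} {μ : Measure Ω} [IsFiniteMeasure μ]
    (hm : m ≤ m0) {f g : Ω → ℝ} (hf : Integrable f μ) (hg : Integrable g μ) (a b : ℝ) :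
    μ[fun ω => 1 + a * f ω + b * g ω|m] =ᵐ[μ]
      fun ω => 1 + a * (μ[f|m]) ω + b * (μ[g|m]) ω := by
  have haf : Integrable (fun ω => a * f ω) μ := hf.const_mul a
  have hbg : Integrable (fun ω => b * g ω) μ := hg.const_mul b
  have h1 : μ[fun ω => (1 + a * f ω) + b * g ω|m] =ᵐ[μ]
      μ[fun ω => 1 + a * f ω|m] + μ[fun ω => b * g ω|m] :=
    condExp_add ((integrable_const 1).add haf) hbg m
  have h2 : μ[fun ω => (1 : ℝ) + a * f ω|m] =ᵐ[μ] μ[fun _ => (1 : ℝ)|m] + μ[fun ω => a * f ω|m] :=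
    condExp_add (integrable_const 1) haf m
  have h3 : μ[fun ω => a * f ω|m] =ᵐ[μ] fun ω => a * (μ[f|m]) ω := condExp_smul a f m
  have h4 : μ[fun ω => b * g ω|m] =ᵐ[μ] fun ω => b * (μ[g|m]) ω := condExp_smul b g m
  have h5 := condExp_const hm (1 : ℝ) (μ := μ)
  filter_upwards [h1, h2, h3, h4] with ω e1 e2 e3 e4
  simp only [Pi.add_apply] at e1 e2
  rw [e1, e2, e3, e4, h5]


/-- Freedman-type inequality (Theorem 15): if `Y₀ = 0`, the increments `Y_t - Y_{t-1}`
are bounded by `1` and satisfy the conditional drift condition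
`E[Y_t - Y_{t-1} | F_{t-1}] ≤ -α E[(Y_t - Y_{t-1})² | F_{t-1}]` for some `α ∈ (0, 1/2)`,
then `P[Y_n ≥ λ] ≤ exp(-αλ)` for every `λ ≥ 0`. -/
theorem freedman_drift_tail {Ω : Type*} {m0 : MeasurableSpace Ω} (μ : Measure Ω)
    [IsProbabilityMeasure μ] (ℱ : Filtration ℕ m0) (n : ℕ) (Y : ℕ → Ω → ℝ)
    (hadapted : Adapted ℱ Y) (hY0 : ∀ ω, Y 0 ω = 0) (α : ℝ)
    (hα : α ∈ Set.Ioo (0 : ℝ) (1 / 2))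
    (hbdd : ∀ t, ∀ᵐ ω ∂μ, |Y (t + 1) ω - Y t ω| ≤ 1)
    (hdrift : ∀ t, ∀ᵐ ω ∂μ,
      (μ[fun ω' => Y (t + 1) ω' - Y t ω' | ℱ t]) ω ≤
        -α * (μ[fun ω' => (Y (t + 1) ω' - Y t ω') ^ 2 | ℱ t]) ω)
    (lam : ℝ) (hlam : 0 ≤ lam) :
    μ {ω | lam ≤ Y n ω} ≤ ENNReal.ofReal (Real.exp (-α * lam)) := by
  obtain ⟨hα0, hα2⟩ := hα
  have hmeas : ∀ t, StronglyMeasurable[m0] (Y t) := fun t => ((hadapted t).mono (ℱ.le t) le_rfl).stronglyMeasurable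
  -- a.s. bound |Y t| ≤ t
  have hYb : ∀ t, ∀ᵐ ω ∂μ, |Y t ω| ≤ t := by
    intro t
    induction t with
    | zero => filter_upwards with ω; simp [hY0]
    | succ t ih =>
      filter_upwards [ih, hbdd t] with ω h1 h2
      have : |Y (t + 1) ω| ≤ |Y (t + 1) ω - Y t ω| + |Y t ω| := by
        simpa using abs_add_le (Y (t + 1) ω - Y t ω) (Y t ω)
      push_cast
      linarith
  -- integrability of exp(α Y t)
  have hexp_int : ∀ t, Integrable (fun ω => Real.exp (α * Y t ω)) μ := by
    intro t
    refine Integrable.mono' (integrable_const (Real.exp (α * t)))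
      ((Real.continuous_exp.comp_stronglyMeasurable ((hmeas t).const_mul α)).aestronglyMeasurable)
      ?_
    filter_upwards [hYb t] with ω hω
    rw [Real.norm_eq_abs, abs_of_pos (Real.exp_pos _), Real.exp_le_exp]
    have : Y t ω ≤ t := le_trans (le_abs_self _) hω
    nlinarith
  -- key step
  have key : ∀ t, ∫ ω, Real.exp (α * Y (t + 1) ω) ∂μ ≤ ∫ ω, Real.exp (α * Y t ω) ∂μ := by
    intro t
    have hDmeas : StronglyMeasurable[m0] (fun ω => Y (t + 1) ω - Y t ω) :=
      (hmeas (t + 1)).sub (hmeas t)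
    have hDint : Integrable (fun ω => Y (t + 1) ω - Y t ω) μ := by
      refine Integrable.mono' (integrable_const 1) hDmeas.aestronglyMeasurable ?_
      filter_upwards [hbdd t] with ω hω using by simpa using hω
    have hD2int : Integrable (fun ω => (Y (t + 1) ω - Y t ω) ^ 2) μ := by
      refine Integrable.mono' (integrable_const 1) (hDmeas.pow 2).aestronglyMeasurable ?_
      filter_upwards [hbdd t] with ω hω
      rw [Real.norm_eq_abs, abs_pow]
      nlinarith [abs_nonneg (Y (t + 1) ω - Y t ω)]
    have hexpD_int : Integrable (fun ω => Real.exp (α * (Y (t + 1) ω - Y t ω))) μ := by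
      refine Integrable.mono' (integrable_const (Real.exp α))
        ((Real.continuous_exp.comp_stronglyMeasurable
          (hDmeas.const_mul α)).aestronglyMeasurable) ?_
      filter_upwards [hbdd t] with ω hω
      rw [Real.norm_eq_abs, abs_of_pos (Real.exp_pos _), Real.exp_le_exp]
      nlinarith [abs_le.1 hω]
    -- product decomposition
    have hprod_int : Integrable
        ((fun ω => Real.exp (α * Y t ω)) * fun ω => Real.exp (α * (Y (t + 1) ω - Y t ω))) μ := by
      have : ((fun ω => Real.exp (α * Y t ω)) *
          fun ω => Real.exp (α * (Y (t + 1) ω - Y t ω)))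
          = fun ω => Real.exp (α * Y (t + 1) ω) := by
        funext ω
        simp only [Pi.mul_apply, ← Real.exp_add]
        ring_nf
      rw [this]
      exact hexp_int (t + 1)
    have hpull :
        μ[(fun ω => Real.exp (α * Y t ω)) * fun ω => Real.exp (α * (Y (t + 1) ω - Y t ω))|ℱ t]
          =ᵐ[μ] (fun ω => Real.exp (α * Y t ω)) *
            μ[fun ω => Real.exp (α * (Y (t + 1) ω - Y t ω))|ℱ t] :=
      condExp_mul_of_stronglyMeasurable_left
        (Real.continuous_exp.comp_stronglyMeasurable ((hadapted t).stronglyMeasurable.const_mul α))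
        hprod_int hexpD_int
    -- conditional expectation of exp(α D) is at most 1
    have hcond1 : ∀ᵐ ω ∂μ, (μ[fun ω => Real.exp (α * (Y (t + 1) ω - Y t ω))|ℱ t]) ω ≤ 1 := by
      have hpt : (fun ω => Real.exp (α * (Y (t + 1) ω - Y t ω))) ≤ᵐ[μ]
          fun ω => 1 + α * (Y (t + 1) ω - Y t ω) + α ^ 2 * (Y (t + 1) ω - Y t ω) ^ 2 := by
        filter_upwards [hbdd t] with ω hω
        have habs : |α * (Y (t + 1) ω - Y t ω)| ≤ 1 := by
          rw [abs_mul, abs_of_pos hα0]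
          nlinarith [abs_nonneg (Y (t + 1) ω - Y t ω)]
        have := exp_le_one_add_add_sq habs
        calc Real.exp (α * (Y (t + 1) ω - Y t ω))
            ≤ 1 + α * (Y (t + 1) ω - Y t ω) + (α * (Y (t + 1) ω - Y t ω)) ^ 2 := this
          _ = 1 + α * (Y (t + 1) ω - Y t ω) + α ^ 2 * (Y (t + 1) ω - Y t ω) ^ 2 := by ring
      have haff_int : Integrable (fun ω =>
          1 + α * (Y (t + 1) ω - Y t ω) + α ^ 2 * (Y (t + 1) ω - Y t ω) ^ 2) μ :=
        ((integrable_const 1).add (hDint.const_mul α)).add (hD2int.const_mul (α ^ 2))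
      have hcm := condExp_mono (m := ℱ t) hexpD_int haff_int hpt
      have hlin := condexp_affine (ℱ.le t) hDint hD2int α (α ^ 2) (μ := μ)
      filter_upwards [hcm, hlin, hdrift t] with ω e1 e2 e3
      rw [e2] at e1
      nlinarith
    -- put everything together
    have hint1 := integral_condExp (ℱ.le t) (μ := μ) (f := fun ω => Real.exp (α * Y (t + 1) ω))
    have heq : (fun ω => Real.exp (α * Y (t + 1) ω)) =
        ((fun ω => Real.exp (α * Y t ω)) * fun ω => Real.exp (α * (Y (t + 1) ω - Y t ω))) := by
      funext ω
      simp only [Pi.mul_apply, ← Real.exp_add]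
      ring_nf
    calc ∫ ω, Real.exp (α * Y (t + 1) ω) ∂μ
        = ∫ ω, (μ[fun ω => Real.exp (α * Y (t + 1) ω)|ℱ t]) ω ∂μ := hint1.symm
      _ = ∫ ω, ((fun ω => Real.exp (α * Y t ω)) *
            μ[fun ω => Real.exp (α * (Y (t + 1) ω - Y t ω))|ℱ t]) ω ∂μ := by
          refine integral_congr_ae ?_
          have : μ[fun ω => Real.exp (α * Y (t + 1) ω)|ℱ t] =ᵐ[μ]
              μ[(fun ω => Real.exp (α * Y t ω)) *
                fun ω => Real.exp (α * (Y (t + 1) ω - Y t ω))|ℱ t] := by rw [← heq]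
          exact this.trans hpull
      _ ≤ ∫ ω, Real.exp (α * Y t ω) ∂μ := by
          refine integral_mono_ae ?_ (hexp_int t) ?_
          · refine (integrable_condExp (f := (fun ω => Real.exp (α * Y t ω)) *
              fun ω => Real.exp (α * (Y (t + 1) ω - Y t ω))) (m := ℱ t)).congr hpull
          · filter_upwards [hcond1] with ω hω
            have := Real.exp_pos (α * Y t ω)
            simp only [Pi.mul_apply]
            nlinarith
  -- expectation at time n is at most 1
  have hEn : ∫ ω, Real.exp (α * Y n ω) ∂μ ≤ 1 := by
    induction n with
    | zero => simp [hY0]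
    | succ t ih => exact (key t).trans ih
  -- Markov's inequality
  have hmark := mul_meas_ge_le_integral_of_nonneg
    (μ := μ) (f := fun ω => Real.exp (α * Y n ω))
    (Filter.Eventually.of_forall fun ω => (Real.exp_pos _).le) (hexp_int n)
    (Real.exp (α * lam))
  have hset : {x | Real.exp (α * lam) ≤ Real.exp (α * Y n x)} = {ω | lam ≤ Y n ω} := by
    ext ω
    simp only [Set.mem_setOf_eq, Real.exp_le_exp]
    exact ⟨fun h => le_of_mul_le_mul_left h hα0, fun h => by nlinarith⟩
  rw [hset] at hmark
  have hfin : μ {ω | lam ≤ Y n ω} ≠ ⊤ := measure_ne_top μ _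
  have htoReal : (μ {ω | lam ≤ Y n ω}).toReal ≤ Real.exp (-α * lam) := by
    have hepos := Real.exp_pos (α * lam)
    have : (μ {ω | lam ≤ Y n ω}).toReal ≤ 1 / Real.exp (α * lam) := by
      rw [le_div_iff₀ hepos, mul_comm]
      rw [measureReal_def] at hmark
      linarith
    rwa [one_div, ← Real.exp_neg, ← neg_mul] at this
  calc μ {ω | lam ≤ Y n ω} = ENNReal.ofReal (μ {ω | lam ≤ Y n ω}).toReal :=
        (ENNReal.ofReal_toReal hfin).symm
    _ ≤ ENNReal.ofReal (Real.exp (-α * lam)) := ENNReal.ofReal_le_ofReal htoReal
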